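/- Every maximal outerplanar graph G can be properly 4-colored so that every 4-cycle of G receives all four colors. -/

import Mathlib

open SimpleGraph

/-- `S` is a double dominating set of `G`: every vertex has at least two
vertices of its closed neighborhood in `S`. -/
def IsDoubleDomSet {V : Type*} [Fintype V] [DecidableEq V]
    (G : SimpleGraph V) [DecidableRel G.Adj] (S : Finset V) : Prop :=
  ∀ v : V, 2 ≤ (S ∩ insert v (G.neighborFinset v)).card

/-- The double domination number `γ×2(G)`. -/
noncomputable def doubleDomNum {V : Type*} [Fintype V] [DecidableEq V]
    (G : SimpleGraph V) [DecidableRel G.Adj] : ℕ :=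
  sInf {k | ∃ S : Finset V, IsDoubleDomSet G S ∧ S.card = k}

/-- `H` is a minor of `G`. -/
def HasMinor {V W : Type*} (G : SimpleGraph V) (H : SimpleGraph W) : Prop :=
  ∃ f : W → Set V,
    (∀ w, (f w).Nonempty) ∧
    (∀ w, (G.induce (f w)).Connected) ∧
    (Pairwise fun w₁ w₂ => Disjoint (f w₁) (f w₂)) ∧
    ∀ ⦃w₁ w₂⦄, H.Adj w₁ w₂ → ∃ a ∈ f w₁, ∃ b ∈ f w₂, G.Adj a b

/-- A graph is outerplanar iff it has no `K₄` minor and no `K_{2,3}` minor. -/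
def Outerplanar {V : Type*} (G : SimpleGraph V) : Prop :=
  ¬ HasMinor G (⊤ : SimpleGraph (Fin 4)) ∧
  ¬ HasMinor G (completeBipartiteGraph (Fin 2) (Fin 3))

/-- Maximal outerplanar: outerplanar, and adding any missing edge destroys
outerplanarity. -/
def MaximalOuterplanar {V : Type*} (G : SimpleGraph V) : Prop :=
  Outerplanar G ∧
  ∀ u v : V, u ≠ v → ¬ G.Adj u v →
    ¬ Outerplanar (G ⊔ SimpleGraph.fromEdgeSet {s(u, v)})

/-- `T` is an internal triangle of `G`: a triangle none of whose edges lies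
on any Hamiltonian cycle (for a maximal outerplanar graph on `≥ 4` vertices
the Hamiltonian cycle, i.e. the boundary of the outer face, is unique). -/
def IsInternalTriangle {V : Type*} [DecidableEq V] (G : SimpleGraph V) (T : Finset V) : Prop :=
  ∃ a b c : V, T = {a, b, c} ∧ a ≠ b ∧ a ≠ c ∧ b ≠ c ∧
    G.Adj a b ∧ G.Adj a c ∧ G.Adj b c ∧
    ∀ ⦃v : V⦄ (p : G.Walk v v), p.IsHamiltonianCycle →
      s(a, b) ∉ p.edges ∧ s(a, c) ∉ p.edges ∧ s(b, c) ∉ p.edges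

/-- `IsTwoTreeOn G s`: the induced subgraph of `G` on `s` is a 2-tree,
built from a triangle by repeatedly adding a vertex joined exactly to the
two endpoints of an existing edge. -/
inductive IsTwoTreeOn {V : Type*} [DecidableEq V] (G : SimpleGraph V) :
    Finset V → Prop
  | triangle {a b c : V} : a ≠ b → a ≠ c → b ≠ c →
      G.Adj a b → G.Adj a c → G.Adj b c → IsTwoTreeOn G {a, b, c}
  | grow {s : Finset V} {x y v : V} : IsTwoTreeOn G s → x ∈ s → y ∈ s →
      G.Adj x y → v ∉ s → (∀ u ∈ s, G.Adj v u ↔ u = x ∨ u = y) →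
      IsTwoTreeOn G (insert v s)

/-- `G` is a 2-tree (equivalently, a maximal `K₄`-minor-free graph). -/
def IsTwoTree {V : Type*} [Fintype V] [DecidableEq V] (G : SimpleGraph V) : Prop :=
  IsTwoTreeOn G Finset.univ

section MopAux
variable {V : Type*} {W : Type*}

lemma mop_rtg_symm {r : V → V → Prop} (hr : Symmetric r) {a b : V}
    (h : Relation.ReflTransGen r a b) : Relation.ReflTransGen r b a := by
  induction h with
  | refl => exact .refl
  | tail hab hbc ih => exact Relation.ReflTransGen.head (hr hbc) ih

private lemma walk_rtg {G : SimpleGraph V} {s : Set V} :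
    ∀ {a b : ↥s} (_ : (G.induce s).Walk a b),
      Relation.ReflTransGen (fun p q => p ∈ s ∧ q ∈ s ∧ G.Adj p q) a b
  | _, _, SimpleGraph.Walk.nil => .refl
  | a, _, SimpleGraph.Walk.cons h w =>
      Relation.ReflTransGen.head ⟨Subtype.mem _, Subtype.mem _, h⟩ (walk_rtg w)

private lemma rtg_reach {G : SimpleGraph V} {s : Set V} {p q : V}
    (h : Relation.ReflTransGen (fun p q => p ∈ s ∧ q ∈ s ∧ G.Adj p q) p q) :
    ∀ (hp : p ∈ s) (hq : q ∈ s), (G.induce s).Reachable ⟨p, hp⟩ ⟨q, hq⟩ := by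
  induction h with
  | refl => intro hp hq; rfl
  | tail hab hbc ih =>
      intro hp hq
      exact (ih hp hbc.1).trans (SimpleGraph.Adj.reachable (by exact hbc.2.2))

lemma mop_induce_connected_iff (G : SimpleGraph V) (s : Set V) :
    (G.induce s).Connected ↔ s.Nonempty ∧ ∀ x ∈ s, ∀ y ∈ s,
      Relation.ReflTransGen (fun p q => p ∈ s ∧ q ∈ s ∧ G.Adj p q) x y := by
  constructor
  · intro h
    refine ⟨Set.nonempty_coe_sort.mp h.nonempty, ?_⟩
    intro x hx y hy
    obtain ⟨w⟩ := h.preconnected ⟨x, hx⟩ ⟨y, hy⟩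
    exact walk_rtg w
  · rintro ⟨hne, h⟩
    rw [SimpleGraph.connected_iff]
    refine ⟨?_, Set.nonempty_coe_sort.mpr hne⟩
    rintro ⟨x, hx⟩ ⟨y, hy⟩
    exact rtg_reach (h x hx y hy) hx hy

lemma mop_singleton_conn (G : SimpleGraph V) (a : V) : (G.induce {a}).Connected := by
  rw [mop_induce_connected_iff]
  refine ⟨⟨a, rfl⟩, ?_⟩
  intro x hx y hy
  rw [Set.mem_singleton_iff] at hx hy
  subst hx; subst hy; exact .refl

private lemma rtg_map_val {G : SimpleGraph V} {s : Set V} {t : Set ↥s} {a b : ↥s}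
    (h : Relation.ReflTransGen (fun p q => p ∈ t ∧ q ∈ t ∧ (G.induce s).Adj p q) a b) :
    Relation.ReflTransGen
      (fun p q : V => p ∈ Subtype.val '' t ∧ q ∈ Subtype.val '' t ∧ G.Adj p q) a b := by
  induction h with
  | refl => exact .refl
  | tail hab hbc ih => exact ih.tail ⟨⟨_, hbc.1, rfl⟩, ⟨_, hbc.2.1, rfl⟩, hbc.2.2⟩

/-- Deleting vertices (inducing) cannot create minors. -/
lemma mop_minor_induce {G : SimpleGraph V} {s : Set V} {H : SimpleGraph W}
    (h : HasMinor (G.induce s) H) : HasMinor G H := by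
  obtain ⟨f, hne, hconn, hdisj, hadj⟩ := h
  refine ⟨fun w => Subtype.val '' f w, fun w => (hne w).image _, ?_, ?_, ?_⟩
  · intro w
    rw [mop_induce_connected_iff]
    have h2 := (mop_induce_connected_iff _ _).mp (hconn w)
    refine ⟨h2.1.image _, ?_⟩
    rintro x ⟨x', hx', rfl⟩ y ⟨y', hy', rfl⟩
    exact rtg_map_val (h2.2 x' hx' y' hy')
  · intro w₁ w₂ hw
    rw [Set.disjoint_left]
    rintro x ⟨x', hx', rfl⟩ ⟨y', hy', hyx⟩
    have : y' = x' := Subtype.val_injective hyx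
    subst this
    exact Set.disjoint_left.mp (hdisj hw) hx' hy'
  · intro w₁ w₂ hw
    obtain ⟨a, ha, b, hb, hab⟩ := hadj hw
    exact ⟨a, ⟨a, ha, rfl⟩, b, ⟨b, hb, rfl⟩, hab⟩

/-- K4 minor from four branch sets. -/
lemma mop_k4_of_sets {G : SimpleGraph V} (B : Fin 4 → Set V)
    (hne : ∀ i, (B i).Nonempty) (hconn : ∀ i, (G.induce (B i)).Connected)
    (hdisj : Pairwise fun i j => Disjoint (B i) (B j))
    (hadj : ∀ i j, i < j → ∃ a ∈ B i, ∃ b ∈ B j, G.Adj a b) :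
    HasMinor G (⊤ : SimpleGraph (Fin 4)) := by
  refine ⟨B, hne, hconn, hdisj, ?_⟩
  intro i j hij
  rcases lt_or_gt_of_ne (by simpa using hij) with h | h
  · exact hadj i j h
  · obtain ⟨a, ha, b, hb, hab⟩ := hadj j i h
    exact ⟨b, hb, a, ha, hab.symm⟩

/-- K4 minor from a 4-clique. -/
lemma mop_k4_of_clique {G : SimpleGraph V} {a b c d : V}
    (hab : G.Adj a b) (hac : G.Adj a c) (had : G.Adj a d)
    (hbc : G.Adj b c) (hbd : G.Adj b d) (hcd : G.Adj c d) :
    HasMinor G (⊤ : SimpleGraph (Fin 4)) := by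
  have nab := G.ne_of_adj hab; have nac := G.ne_of_adj hac; have nad := G.ne_of_adj had
  have nbc := G.ne_of_adj hbc; have nbd := G.ne_of_adj hbd; have ncd := G.ne_of_adj hcd
  have nba := nab.symm; have nca := nac.symm; have nda := nad.symm
  have ncb := nbc.symm; have ndb := nbd.symm; have ndc := ncd.symm
  refine mop_k4_of_sets ![{a}, {b}, {c}, {d}] ?_ ?_ ?_ ?_
  · intro i; fin_cases i <;> exact ⟨_, rfl⟩
  · intro i; fin_cases i <;> exact mop_singleton_conn _ _
  · intro i j hij
    fin_cases i <;> fin_cases j <;> simp_all [Set.disjoint_singleton]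
  · intro i j hij
    fin_cases i <;> fin_cases j <;> simp_all <;>
      exact ⟨_, rfl, _, rfl, by assumption⟩

/-- K_{2,3} minor from two vertices with three common neighbours. -/
lemma mop_k23_of_common {G : SimpleGraph V} {x y z₁ z₂ z₃ : V}
    (hxy : x ≠ y) (h12 : z₁ ≠ z₂) (h13 : z₁ ≠ z₃) (h23 : z₂ ≠ z₃)
    (a1 : G.Adj x z₁) (a2 : G.Adj x z₂) (a3 : G.Adj x z₃)
    (b1 : G.Adj y z₁) (b2 : G.Adj y z₂) (b3 : G.Adj y z₃) :
    HasMinor G (completeBipartiteGraph (Fin 2) (Fin 3)) := by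
  have n1 := G.ne_of_adj a1; have n2 := G.ne_of_adj a2; have n3 := G.ne_of_adj a3
  have m1 := G.ne_of_adj b1; have m2 := G.ne_of_adj b2; have m3 := G.ne_of_adj b3
  have n1' := n1.symm; have n2' := n2.symm; have n3' := n3.symm
  have m1' := m1.symm; have m2' := m2.symm; have m3' := m3.symm
  have hyx := hxy.symm; have h21 := h12.symm; have h31 := h13.symm; have h32 := h23.symm
  refine ⟨Sum.elim ![({x} : Set V), {y}] ![({z₁} : Set V), {z₂}, {z₃}], ?_, ?_, ?_, ?_⟩
  · rintro (i | j)
    · fin_cases i <;> exact ⟨_, rfl⟩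
    · fin_cases j <;> exact ⟨_, rfl⟩
  · rintro (i | j)
    · fin_cases i <;> exact mop_singleton_conn _ _
    · fin_cases j <;> exact mop_singleton_conn _ _
  · rintro (i | j) (i' | j') hne
    · fin_cases i <;> fin_cases i' <;> simp_all [Set.disjoint_singleton]
    · fin_cases i <;> fin_cases j' <;> simp_all [Set.disjoint_singleton]
    · fin_cases j <;> fin_cases i' <;> simp_all [Set.disjoint_singleton]
    · fin_cases j <;> fin_cases j' <;> simp_all [Set.disjoint_singleton]
  · rintro (i | j) (i' | j') hadj
    · simp at hadj
    · fin_cases i <;> fin_cases j' <;> exact ⟨_, rfl, _, rfl, by assumption⟩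
    · fin_cases j <;> fin_cases i' <;> exact ⟨_, rfl, _, rfl, (by assumption : G.Adj _ _).symm⟩
    · simp at hadj

end MopAux

section MopAuxB
variable {V : Type*} {W : Type*}

/-- The graph obtained by contracting `v` into `u` (deleting `v`). -/
def mopContract (G : SimpleGraph V) (u v : V) : SimpleGraph {w : V // w ≠ v} where
  Adj a b := a ≠ b ∧ (G.Adj a b ∨ ((a : V) = u ∧ G.Adj v b) ∨ ((b : V) = u ∧ G.Adj v a))
  symm := by
    constructor; rintro a b ⟨hne, h⟩
    refine ⟨hne.symm, ?_⟩
    rcases h with h | ⟨h1, h2⟩ | ⟨h1, h2⟩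
    · exact Or.inl h.symm
    · exact Or.inr (Or.inr ⟨h1, h2⟩)
    · exact Or.inr (Or.inl ⟨h1, h2⟩)
  loopless := by constructor; rintro a ⟨hne, -⟩; exact hne rfl

lemma mopContract_adj {G : SimpleGraph V} {u v : V} {a b : {w : V // w ≠ v}} :
    (mopContract G u v).Adj a b ↔
      a ≠ b ∧ (G.Adj a b ∨ ((a : V) = u ∧ G.Adj v b) ∨ ((b : V) = u ∧ G.Adj v a)) :=
  Iff.rfl

/-- Contraction cannot create minors. -/
lemma mop_minor_contract {G : SimpleGraph V} {u v : V} (huv : G.Adj u v)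
    {H : SimpleGraph W} (h : HasMinor (mopContract G u v) H) : HasMinor G H := by
  classical
  obtain ⟨f, hne, hconn, hdisj, hadj⟩ := h
  have hu : u ≠ v := G.ne_of_adj huv
  set F : W → Set V := fun w =>
    {x | (∃ hx : x ≠ v, (⟨x, hx⟩ : {w : V // w ≠ v}) ∈ f w) ∨
      (x = v ∧ (⟨u, hu⟩ : {w : V // w ≠ v}) ∈ f w)} with hF
  have memF : ∀ (w) (a : {w : V // w ≠ v}), a ∈ f w → (a : V) ∈ F w := by
    intro w a ha
    exact Or.inl ⟨a.2, by simpa using ha⟩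
  have memFv : ∀ (w), (⟨u, hu⟩ : {w : V // w ≠ v}) ∈ f w → v ∈ F w := by
    intro w hw; exact Or.inr ⟨rfl, hw⟩
  refine ⟨F, ?_, ?_, ?_, ?_⟩
  · intro w
    obtain ⟨a, ha⟩ := hne w
    exact ⟨a, memF w a ha⟩
  · intro w
    have h2 := (mop_induce_connected_iff _ _).mp (hconn w)
    rw [mop_induce_connected_iff]
    obtain ⟨a₀, ha₀⟩ := hne w
    -- step 1 : transfer subtype RTG to V RTG
    have key : ∀ {a b : {w : V // w ≠ v}}, a ∈ f w → b ∈ f w →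
        Relation.ReflTransGen
          (fun p q => p ∈ f w ∧ q ∈ f w ∧ (mopContract G u v).Adj p q) a b →
        Relation.ReflTransGen (fun p q => p ∈ F w ∧ q ∈ F w ∧ G.Adj p q) a b := by
      intro a b ha hb hr
      clear hb
      induction hr with
      | refl => exact .refl
      | tail hab hbc ih =>
          obtain ⟨hbf, hcf, hne', hadj'⟩ := hbc
          rcases hadj' with h' | ⟨h1, h2⟩ | ⟨h1, h2⟩
          · exact ih.tail ⟨memF w _ hbf, memF w _ hcf, h'⟩
          · -- ↑b = u, route through v
            have hbu : (⟨u, hu⟩ : {w : V // w ≠ v}) ∈ f w := by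
              have : (⟨u, hu⟩ : {w : V // w ≠ v}) = _ := Subtype.ext h1.symm
              rw [this]; exact hbf
            have s1 : Relation.ReflTransGen
                (fun p q => p ∈ F w ∧ q ∈ F w ∧ G.Adj p q) _ v :=
              Relation.ReflTransGen.single
                ⟨memF w _ hbf, memFv w hbu, by rw [h1]; exact huv⟩
            exact (ih.trans s1).tail ⟨memFv w hbu, memF w _ hcf, h2⟩
          · -- ↑c = u
            have hcu : (⟨u, hu⟩ : {w : V // w ≠ v}) ∈ f w := by
              have : (⟨u, hu⟩ : {w : V // w ≠ v}) = _ := Subtype.ext h1.symm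
              rw [this]; exact hcf
            have s1 : Relation.ReflTransGen
                (fun p q => p ∈ F w ∧ q ∈ F w ∧ G.Adj p q) _ v :=
              Relation.ReflTransGen.single
                ⟨memF w _ hbf, memFv w hcu, h2.symm⟩
            exact (ih.trans s1).tail
              ⟨memFv w hcu, memF w _ hcf, by rw [h1]; exact huv.symm⟩
    have hsymm : Symmetric (fun p q => p ∈ F w ∧ q ∈ F w ∧ G.Adj p q) := by
      rintro p q ⟨h1, h2, h3⟩; exact ⟨h2, h1, h3.symm⟩
    -- step 2 : from any x ∈ F w reach some lifted element
    have step2 : ∀ x ∈ F w, ∃ a : {w : V // w ≠ v}, a ∈ f w ∧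
        Relation.ReflTransGen (fun p q => p ∈ F w ∧ q ∈ F w ∧ G.Adj p q) x a := by
      intro x hx
      rcases hx with ⟨hx', hmem⟩ | ⟨rfl, hmem⟩
      · exact ⟨⟨x, hx'⟩, hmem, .refl⟩
      · exact ⟨⟨u, hu⟩, hmem,
          Relation.ReflTransGen.single
            ⟨Or.inr ⟨rfl, hmem⟩, memF _ _ hmem, huv.symm⟩⟩
    refine ⟨⟨a₀, memF w a₀ ha₀⟩, ?_⟩
    intro x hx y hy
    obtain ⟨a, ha, hxa⟩ := step2 x hx
    obtain ⟨b, hb, hyb⟩ := step2 y hy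
    have hab := key ha hb (h2.2 a ha b hb)
    exact (hxa.trans hab).trans (mop_rtg_symm hsymm hyb)
  · intro w₁ w₂ hw
    rw [Set.disjoint_left]
    rintro x (⟨hx, hm1⟩ | ⟨rfl, hm1⟩) (⟨hx', hm2⟩ | ⟨h2, hm2⟩)
    · exact Set.disjoint_left.mp (hdisj hw) hm1 hm2
    · exact absurd h2 hx
    · exact absurd rfl hx'
    · exact Set.disjoint_left.mp (hdisj hw) hm1 hm2
  · intro w₁ w₂ hw
    obtain ⟨a, ha, b, hb, hab⟩ := hadj hw
    obtain ⟨-, h' | ⟨h1, h2⟩ | ⟨h1, h2⟩⟩ := hab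
    · exact ⟨a, memF _ _ ha, b, memF _ _ hb, h'⟩
    · refine ⟨v, ?_, b, memF _ _ hb, h2⟩
      refine Or.inr ⟨rfl, ?_⟩
      have : (⟨u, hu⟩ : {w : V // w ≠ v}) = a := Subtype.ext h1.symm
      rw [this]; exact ha
    · refine ⟨a, memF _ _ ha, v, ?_, h2.symm⟩
      refine Or.inr ⟨rfl, ?_⟩
      have : (⟨u, hu⟩ : {w : V // w ≠ v}) = b := Subtype.ext h1.symm
      rw [this]; exact hb

private lemma walk_of_rtg {G : SimpleGraph V} {S : Set V} {a b : V}
    (h : Relation.ReflTransGen (fun p q => p ∈ S ∧ q ∈ S ∧ G.Adj p q) a b)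
    (ha : a ∈ S) : ∃ w : G.Walk a b, ∀ x ∈ w.support, x ∈ S := by
  induction h with
  | refl =>
      refine ⟨Walk.nil, ?_⟩
      intro x hx
      simp only [Walk.support_nil, List.mem_singleton] at hx
      subst hx; exact ha
  | tail hab hbc ih =>
      obtain ⟨w, hw⟩ := ih
      refine ⟨w.concat hbc.2.2, ?_⟩
      intro x hx
      rw [Walk.support_concat] at hx
      rcases List.mem_append.mp hx with h' | h'
      · exact hw x h'
      · rw [List.mem_singleton] at h'; subst h'; exact hbc.2.1

private lemma walk_support_rtg {G : SimpleGraph V} :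
    ∀ {a b : V} (w : G.Walk a b) (x : V), x ∈ w.support →
      Relation.ReflTransGen
        (fun p q => p ∈ {y | y ∈ w.support} ∧ q ∈ {y | y ∈ w.support} ∧ G.Adj p q) a x := by
  intro a b w
  induction w with
  | nil =>
      intro x hx
      simp only [Walk.support_nil, List.mem_singleton] at hx
      subst hx; exact .refl
  | @cons a c b h w ih =>
      intro x hx
      rw [Walk.support_cons] at hx
      rcases List.mem_cons.mp hx with rfl | hx'
      · exact .refl
      · have sub : {y | y ∈ w.support} ⊆ {y | y ∈ (Walk.cons h w).support} := by
          intro y hy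
          rw [Set.mem_setOf_eq, Walk.support_cons]
          exact List.mem_cons_of_mem _ hy
        have base := Relation.ReflTransGen.mono
          (p := fun p q => p ∈ {y | y ∈ (Walk.cons h w).support} ∧
            q ∈ {y | y ∈ (Walk.cons h w).support} ∧ G.Adj p q)
          (by intro p q hpq; exact ⟨sub hpq.1, sub hpq.2.1, hpq.2.2⟩) _ _ (ih x hx')
        have m1 : a ∈ {y | y ∈ (Walk.cons h w).support} := by
          rw [Set.mem_setOf_eq, Walk.support_cons]; exact List.mem_cons_self
        have m2 : c ∈ {y | y ∈ (Walk.cons h w).support} := by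
          rw [Set.mem_setOf_eq, Walk.support_cons]
          exact List.mem_cons_of_mem _ w.start_mem_support
        exact Relation.ReflTransGen.head ⟨m1, m2, h⟩ base

/-- Two adjacent vertices with two common neighbours joined avoiding them: K4 minor. -/
lemma mop_k4_of_theta {G : SimpleGraph V} {u v t t' : V}
    (huv : G.Adj u v) (hut : G.Adj u t) (hvt : G.Adj v t)
    (hut' : G.Adj u t') (hvt' : G.Adj v t') (htt' : t ≠ t')
    (hconn : Relation.ReflTransGen
      (fun p q => (p ≠ u ∧ p ≠ v) ∧ (q ≠ u ∧ q ≠ v) ∧ G.Adj p q) t t') :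
    HasMinor G (⊤ : SimpleGraph (Fin 4)) := by
  classical
  have hconn' : Relation.ReflTransGen
      (fun p q => p ∈ {y : V | y ≠ u ∧ y ≠ v} ∧ q ∈ {y : V | y ≠ u ∧ y ≠ v} ∧ G.Adj p q) t t' :=
    hconn.lift id (fun p q hpq => ⟨hpq.1, hpq.2.1, hpq.2.2⟩)
  obtain ⟨w0, hw0⟩ := walk_of_rtg hconn' ⟨(G.ne_of_adj hut).symm, (G.ne_of_adj hvt).symm⟩
  have hbp : ∀ x ∈ w0.bypass.support, x ≠ u ∧ x ≠ v := by
    intro x hx; exact hw0 x (w0.support_bypass_subset hx)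
  have hpath := w0.bypass_isPath
  cases hq : w0.bypass with
  | nil => exact absurd rfl htt'
  | @cons _ s _ hts q =>
      rw [hq] at hpath hbp
      have hqS : ∀ x ∈ q.support, x ≠ u ∧ x ≠ v := by
        intro x hx
        exact hbp x (by rw [Walk.support_cons]; exact List.mem_cons_of_mem _ hx)
      have htq : t ∉ q.support := (Walk.cons_isPath_iff _ _ |>.mp hpath).2
      set B : Set V := {y | y ∈ q.support} with hB
      have hBconn : (G.induce B).Connected := by
        rw [mop_induce_connected_iff]
        refine ⟨⟨s, q.start_mem_support⟩, ?_⟩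
        have hsymm : Symmetric (fun p q' => p ∈ B ∧ q' ∈ B ∧ G.Adj p q') := by
          intro p q' hp
          exact ⟨hp.2.1, hp.1, hp.2.2.symm⟩
        intro x hx y hy
        exact (mop_rtg_symm hsymm (walk_support_rtg q x hx)).trans (walk_support_rtg q y hy)
      refine mop_k4_of_sets ![{u}, {v}, {t}, B] ?_ ?_ ?_ ?_
      · intro i; fin_cases i
        · exact ⟨_, rfl⟩
        · exact ⟨_, rfl⟩
        · exact ⟨_, rfl⟩
        · exact ⟨s, q.start_mem_support⟩
      · intro i; fin_cases i
        · exact mop_singleton_conn _ _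
        · exact mop_singleton_conn _ _
        · exact mop_singleton_conn _ _
        · exact hBconn
      · have h1 : u ≠ v := G.ne_of_adj huv
        have h2 : u ≠ t := G.ne_of_adj hut
        have h3 : v ≠ t := G.ne_of_adj hvt
        have h1' := h1.symm; have h2' := h2.symm; have h3' := h3.symm
        have hu' : u ∉ B := fun hx => (hqS u hx).1 rfl
        have hv' : v ∉ B := fun hx => (hqS v hx).2 rfl
        have ht' : t ∉ B := htq
        intro i j hij
        fin_cases i <;> fin_cases j <;>
          simp_all [Set.disjoint_singleton_left, Set.disjoint_singleton_right]
      · intro i j hij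
        fin_cases i <;> fin_cases j <;>
          first
            | exact absurd hij (by decide)
            | exact ⟨u, rfl, v, rfl, huv⟩
            | exact ⟨u, rfl, t, rfl, hut⟩
            | exact ⟨u, rfl, t', q.end_mem_support, hut'⟩
            | exact ⟨v, rfl, t, rfl, hvt⟩
            | exact ⟨v, rfl, t', q.end_mem_support, hvt'⟩
            | exact ⟨t, rfl, s, q.start_mem_support, hts⟩

end MopAuxB

section MopAuxC
universe u
variable {V : Type u}

/-- at least one neighbour. -/
def MopDeg1 (G : SimpleGraph V) (x : V) : Prop := ∃ a, G.Adj x a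
/-- at least two neighbours. -/
def MopDeg2 (G : SimpleGraph V) (x : V) : Prop := ∃ a b, a ≠ b ∧ G.Adj x a ∧ G.Adj x b
/-- at least three neighbours. -/
def MopDeg3 (G : SimpleGraph V) (x : V) : Prop :=
  ∃ a b c, a ≠ b ∧ a ≠ c ∧ b ≠ c ∧ G.Adj x a ∧ G.Adj x b ∧ G.Adj x c

/-- has a K4 minor or a K_{2,3} minor. -/
def MopNice (G : SimpleGraph V) : Prop :=
  HasMinor G (⊤ : SimpleGraph (Fin 4)) ∨ HasMinor G (completeBipartiteGraph (Fin 2) (Fin 3))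

lemma mop_nice_contract {G : SimpleGraph V} {u v : V} (huv : G.Adj u v)
    (h : MopNice (mopContract G u v)) : MopNice G := by
  rcases h with h | h
  · exact Or.inl (mop_minor_contract huv h)
  · exact Or.inr (mop_minor_contract huv h)

lemma mop_nice_induce {G : SimpleGraph V} {s : Set V}
    (h : MopNice (G.induce s)) : MopNice G := by
  rcases h with h | h
  · exact Or.inl (mop_minor_induce h)
  · exact Or.inr (mop_minor_induce h)

lemma mop_deg3_avoid {G : SimpleGraph V} {x : V} (h : MopDeg3 G x) (v : V) :
    ∃ a b, a ≠ b ∧ a ≠ v ∧ b ≠ v ∧ G.Adj x a ∧ G.Adj x b := by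
  obtain ⟨a, b, c, hab, hac, hbc, ha, hb, hc⟩ := h
  by_cases hav : a = v
  · exact ⟨b, c, hbc, fun h' => hab (h' ▸ hav.symm ▸ rfl), fun h' => hac (h' ▸ hav.symm ▸ rfl), hb, hc⟩
  · by_cases hbv : b = v
    · exact ⟨a, c, hac, hav, fun h' => hbc (h' ▸ hbv.symm ▸ rfl), ha, hc⟩
    · exact ⟨a, b, hab, hav, hbv, ha, hb⟩

lemma mop_deg3_avoid2 {G : SimpleGraph V} {x : V} (h : MopDeg3 G x) (v w : V) :
    ∃ a, a ≠ v ∧ a ≠ w ∧ G.Adj x a := by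
  obtain ⟨a, b, c, hab, hac, hbc, ha, hb, hc⟩ := h
  by_cases hav : a = v
  · by_cases hbw : b = w
    · exact ⟨c, fun h' => hac (h' ▸ hav ▸ rfl), fun h' => hbc (h' ▸ hbw ▸ rfl), hc⟩
    · exact ⟨b, fun h' => hab (h' ▸ hav ▸ rfl), hbw, hb⟩
  · by_cases haw : a = w
    · by_cases hbv : b = v
      · exact ⟨c, fun h' => hbc (h' ▸ hbv ▸ rfl), fun h' => hac (h' ▸ haw ▸ rfl), hc⟩
      · exact ⟨b, hbv, fun h' => hab (h' ▸ haw ▸ rfl), hb⟩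
    · exact ⟨a, hav, haw, ha⟩

lemma mop_three_of_two_two {α : Type*} (P : α → Prop) {a₁ a₂ b₁ b₂ t : α}
    (ha : a₁ ≠ a₂) (hb : b₁ ≠ b₂)
    (hP1 : P a₁) (hP2 : P a₂) (hP3 : P b₁) (hP4 : P b₂)
    (hcap : ∀ y, (y = a₁ ∨ y = a₂) → (y = b₁ ∨ y = b₂) → y = t) :
    ∃ c₁ c₂ c₃, c₁ ≠ c₂ ∧ c₁ ≠ c₃ ∧ c₂ ≠ c₃ ∧ P c₁ ∧ P c₂ ∧ P c₃ := by
  by_cases h1 : b₁ = a₁ ∨ b₁ = a₂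
  · -- b₁ coincides, then b₂ cannot
    have hb2 : ¬(b₂ = a₁ ∨ b₂ = a₂) := by
      intro h2
      have e1 : b₁ = t := hcap b₁ h1 (Or.inl rfl)
      have e2 : b₂ = t := hcap b₂ h2 (Or.inr rfl)
      exact hb (e1.trans e2.symm)
    push_neg at hb2
    exact ⟨a₁, a₂, b₂, ha, fun h' => hb2.1 h'.symm, fun h' => hb2.2 h'.symm, hP1, hP2, hP4⟩
  · push_neg at h1
    exact ⟨a₁, a₂, b₁, ha, fun h' => h1.1 h'.symm, fun h' => h1.2 h'.symm, hP1, hP2, hP3⟩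

variable {G : SimpleGraph V} {u v : V}

lemma mopContract_adj_of_adj {x z : {w : V // w ≠ v}} (h : G.Adj ↑x ↑z) :
    (mopContract G u v).Adj x z :=
  mopContract_adj.mpr ⟨fun e => G.ne_of_adj h (congrArg Subtype.val e), Or.inl h⟩

lemma mopContract_adj_uslot (hu : u ≠ v) {y : V} (hy : y ≠ v) (hyu : y ≠ u)
    (h : G.Adj u y ∨ G.Adj v y) :
    (mopContract G u v).Adj ⟨u, hu⟩ ⟨y, hy⟩ := by
  refine mopContract_adj.mpr ⟨fun e => hyu (congrArg Subtype.val e).symm, ?_⟩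
  rcases h with h | h
  · exact Or.inl h
  · exact Or.inr (Or.inl ⟨rfl, h⟩)

/-- mapping a neighbour through the contraction. -/
lemma mopContract_map_nbr (hu : u ≠ v) {x : {w : V // w ≠ v}} (hxu : (x : V) ≠ u)
    {y : V} (h : G.Adj ↑x y) :
    ∃ z : {w : V // w ≠ v}, (mopContract G u v).Adj x z ∧
      ((y ≠ v ∧ (z : V) = y) ∨ (y = v ∧ (z : V) = u)) := by
  by_cases hyv : y = v
  · subst hyv
    refine ⟨⟨u, hu⟩, ?_, Or.inr ⟨rfl, rfl⟩⟩
    exact mopContract_adj.mpr ⟨fun e => hxu (congrArg Subtype.val e),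
      Or.inr (Or.inr ⟨rfl, h.symm⟩)⟩
  · exact ⟨⟨y, hyv⟩, mopContract_adj_of_adj h, Or.inl ⟨hyv, rfl⟩⟩

lemma mopContract_deg2_other (hu : u ≠ v) {x : {w : V // w ≠ v}}
    (hxu : (x : V) ≠ u) (h : MopDeg3 G ↑x) : MopDeg2 (mopContract G u v) x := by
  obtain ⟨a, b, c, hab, hac, hbc, ha, hb, hc⟩ := h
  by_cases hav : a = v
  · obtain ⟨zb, hzb, hb'⟩ := mopContract_map_nbr hu hxu hb
    obtain ⟨zc, hzc, hc'⟩ := mopContract_map_nbr hu hxu hc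
    rcases hb' with ⟨hbv, hvb⟩ | ⟨hbv, -⟩
    · rcases hc' with ⟨hcv, hvc⟩ | ⟨hcv, -⟩
      · exact ⟨zb, zc, fun e => hbc (by rw [← hvb, ← hvc, e]), hzb, hzc⟩
      · exact absurd (hav ▸ hcv : c = a) (fun e => hac e.symm)
    · exact absurd (hav ▸ hbv : b = a) (fun e => hab e.symm)
  · by_cases hbv : b = v
    · obtain ⟨za, hza, ha'⟩ := mopContract_map_nbr hu hxu ha
      obtain ⟨zc, hzc, hc'⟩ := mopContract_map_nbr hu hxu hc
      rcases ha' with ⟨-, hva⟩ | ⟨hav', -⟩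
      · rcases hc' with ⟨-, hvc⟩ | ⟨hcv, -⟩
        · exact ⟨za, zc, fun e => hac (by rw [← hva, ← hvc, e]), hza, hzc⟩
        · exact absurd (hbv ▸ hcv : c = b) (fun e => hbc e.symm)
      · exact absurd hav' hav
    · obtain ⟨za, hza, ha'⟩ := mopContract_map_nbr hu hxu ha
      obtain ⟨zb, hzb, hb'⟩ := mopContract_map_nbr hu hxu hb
      rcases ha' with ⟨-, hva⟩ | ⟨hav', -⟩
      · rcases hb' with ⟨-, hvb⟩ | ⟨hbv', -⟩
        · exact ⟨za, zb, fun e => hab (by rw [← hva, ← hvb, e]), hza, hzb⟩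
        · exact absurd hbv' hbv
      · exact absurd hav' hav

lemma mopContract_deg3_other (hu : u ≠ v) {x : {w : V // w ≠ v}}
    (hxu : (x : V) ≠ u) (hnc : ¬(G.Adj ↑x u ∧ G.Adj ↑x v)) (h : MopDeg3 G ↑x) :
    MopDeg3 (mopContract G u v) x := by
  obtain ⟨a, b, c, hab, hac, hbc, ha, hb, hc⟩ := h
  obtain ⟨za, hza, ha'⟩ := mopContract_map_nbr hu hxu ha
  obtain ⟨zb, hzb, hb'⟩ := mopContract_map_nbr hu hxu hb
  obtain ⟨zc, hzc, hc'⟩ := mopContract_map_nbr hu hxu hc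
  have key : ∀ {y z : V} {zy zz : {w : V // w ≠ v}},
      y ≠ z → G.Adj ↑x y → G.Adj ↑x z →
      ((y ≠ v ∧ (zy : V) = y) ∨ (y = v ∧ (zy : V) = u)) →
      ((z ≠ v ∧ (zz : V) = z) ∨ (z = v ∧ (zz : V) = u)) → zy ≠ zz := by
    rintro y z zy zz hyz hy hz (⟨h1, h2⟩ | ⟨h1, h2⟩) (⟨h3, h4⟩ | ⟨h3, h4⟩) <;>
      intro e <;> have e' : (zy : V) = (zz : V) := congrArg Subtype.val e
    · exact hyz (by rw [← h2, e', h4])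
    · have ey : y = u := by rw [← h2, e', h4]
      exact hnc ⟨ey ▸ hy, h3 ▸ hz⟩
    · have ez : z = u := by rw [← h4, ← e', h2]
      exact hnc ⟨ez ▸ hz, h1 ▸ hy⟩
    · exact hyz (h1.trans h3.symm)
  exact ⟨za, zb, zc, key hab ha hb ha' hb', key hac ha hc ha' hc',
    key hbc hb hc hb' hc', hza, hzb, hzc⟩



theorem mop_master : ∀ (n : ℕ) (V : Type u) [Fintype V] (G : SimpleGraph V),
    Fintype.card V = n →
    ((∀ x, MopDeg3 G x) → Nonempty V → MopNice G) ∧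
    (∀ v₀, MopDeg1 G v₀ → (∀ x, x ≠ v₀ → MopDeg3 G x) → MopNice G) ∧
    (∀ a b, G.Adj a b → MopDeg2 G a → MopDeg2 G b →
      (∀ x, x ≠ a → x ≠ b → MopDeg3 G x) → MopNice G) := by
  intro n
  induction n using Nat.strong_induction_on with
  | _ n IH =>
  intro V instV G hcard
  classical
  have cardlt : ∀ v : V, Fintype.card {w : V // w ≠ v} < n := by
    intro v
    rw [← hcard]
    refine Fintype.card_lt_of_injective_of_notMem Subtype.val Subtype.val_injective
      (b := v) ?_
    rintro ⟨⟨w, hw⟩, hval⟩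
    exact hw hval
  -- ==================== L0 ====================
  have L0 : (∀ x, MopDeg3 G x) → Nonempty V → MopNice G := by
    intro h3 hne
    obtain ⟨x0⟩ := hne
    obtain ⟨v, -, -, -, -, -, huv, -, -⟩ :
        ∃ a b c, a ≠ b ∧ a ≠ c ∧ b ≠ c ∧ G.Adj x0 a ∧ G.Adj x0 b ∧ G.Adj x0 c := h3 x0
    set u := x0 with hudef
    have hu : u ≠ v := G.ne_of_adj huv
    by_cases h3c : ∃ z₁ z₂ z₃, z₁ ≠ z₂ ∧ z₁ ≠ z₃ ∧ z₂ ≠ z₃ ∧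
        (G.Adj u z₁ ∧ G.Adj v z₁) ∧ (G.Adj u z₂ ∧ G.Adj v z₂) ∧ (G.Adj u z₃ ∧ G.Adj v z₃)
    · obtain ⟨z₁, z₂, z₃, h12, h13, h23, ⟨c1, d1⟩, ⟨c2, d2⟩, ⟨c3, d3⟩⟩ := h3c
      exact Or.inr (mop_k23_of_common hu h12 h13 h23 c1 c2 c3 d1 d2 d3)
    by_cases h2c : ∃ z₁ z₂, z₁ ≠ z₂ ∧ (G.Adj u z₁ ∧ G.Adj v z₁) ∧ (G.Adj u z₂ ∧ G.Adj v z₂)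
    · obtain ⟨t, t', htt', ⟨hut, hvt⟩, ⟨hut', hvt'⟩⟩ := h2c
      by_cases hreach : Relation.ReflTransGen
          (fun p q => (p ≠ u ∧ p ≠ v) ∧ (q ≠ u ∧ q ≠ v) ∧ G.Adj p q) t t'
      · exact Or.inl (mop_k4_of_theta huv hut hvt hut' hvt' htt' hreach)
      · set K : Set V := {x | (x ≠ u ∧ x ≠ v) ∧ Relation.ReflTransGen
          (fun p q => (p ≠ u ∧ p ≠ v) ∧ (q ≠ u ∧ q ≠ v) ∧ G.Adj p q) t x} with hK
        set S : Set V := {x | x ∈ K ∨ x = u ∨ x = v} with hS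
        have hclosure : ∀ x ∈ K, ∀ y, G.Adj x y → y ∈ S := by
          intro x hx y hxy
          by_cases hyu : y = u
          · exact Or.inr (Or.inl hyu)
          by_cases hyv : y = v
          · exact Or.inr (Or.inr hyv)
          exact Or.inl ⟨⟨hyu, hyv⟩, hx.2.tail ⟨hx.1, ⟨hyu, hyv⟩, hxy⟩⟩
        have htK : t ∈ K := ⟨⟨(G.ne_of_adj hut).symm, (G.ne_of_adj hvt).symm⟩, .refl⟩
        have ht'S : t' ∉ S := by
          rintro (h' | h' | h')
          · exact hreach h'.2
          · exact (G.ne_of_adj hut').symm h'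
          · exact (G.ne_of_adj hvt').symm h'
        have huS : u ∈ S := Or.inr (Or.inl rfl)
        have hvS : v ∈ S := Or.inr (Or.inr rfl)
        have cardS : Fintype.card ↥S < n := by
          rw [← hcard]
          refine Fintype.card_lt_of_injective_of_notMem Subtype.val Subtype.val_injective
            (b := t') ?_
          rintro ⟨⟨w, hw⟩, hval⟩
          exact ht'S (hval ▸ hw)
        have hI := (IH _ cardS ↥S (G.induce S) rfl).2.2
        refine mop_nice_induce (hI ⟨u, huS⟩ ⟨v, hvS⟩ huv ?_ ?_ ?_)
        · exact ⟨⟨v, hvS⟩, ⟨t, Or.inl htK⟩,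
            fun e => (G.ne_of_adj hvt) (congrArg Subtype.val e), huv, hut⟩
        · exact ⟨⟨u, huS⟩, ⟨t, Or.inl htK⟩,
            fun e => (G.ne_of_adj hut) (congrArg Subtype.val e), huv.symm, hvt⟩
        · rintro ⟨x, hxS⟩ hxu hxv
          have hxK : x ∈ K := by
            rcases hxS with h' | h' | h'
            · exact h'
            · exact absurd (Subtype.ext h') hxu
            · exact absurd (Subtype.ext h') hxv
          obtain ⟨a, b, c, hab, hac, hbc, ha, hb, hc⟩ := h3 x
          exact ⟨⟨a, hclosure x hxK a ha⟩, ⟨b, hclosure x hxK b hb⟩,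
            ⟨c, hclosure x hxK c hc⟩,
            fun e => hab (congrArg Subtype.val e), fun e => hac (congrArg Subtype.val e),
            fun e => hbc (congrArg Subtype.val e), ha, hb, hc⟩
    · -- at most one common neighbour
      obtain ⟨a₁, a₂, ha12, ha1v, ha2v, hua1, hua2⟩ := mop_deg3_avoid (h3 u) v
      obtain ⟨b₁, b₂, hb12, hb1u, hb2u, hvb1, hvb2⟩ := mop_deg3_avoid (h3 v) u
      by_cases h1c : ∃ z, G.Adj u z ∧ G.Adj v z
      · obtain ⟨t, hut, hvt⟩ := h1c
        have huniq : ∀ z, G.Adj u z → G.Adj v z → z = t := by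
          intro z h1 h2
          by_contra hzt
          exact h2c ⟨z, t, hzt, ⟨h1, h2⟩, ⟨hut, hvt⟩⟩
        obtain ⟨c₁, c₂, c₃, e12, e13, e23, P1, P2, P3⟩ :=
          mop_three_of_two_two
            (fun y => y ≠ v ∧ y ≠ u ∧ (G.Adj u y ∨ G.Adj v y)) ha12 hb12
            ⟨ha1v, (G.ne_of_adj hua1).symm, Or.inl hua1⟩
            ⟨ha2v, (G.ne_of_adj hua2).symm, Or.inl hua2⟩
            ⟨(G.ne_of_adj hvb1).symm, hb1u, Or.inr hvb1⟩
            ⟨(G.ne_of_adj hvb2).symm, hb2u, Or.inr hvb2⟩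
            (t := t)
            (by rintro y (rfl | rfl) hy <;>
                [ (rcases hy with rfl | rfl;
                    exact huniq _ hua1 hvb1; exact huniq _ hua1 hvb2);
                  (rcases hy with rfl | rfl;
                    exact huniq _ hua2 hvb1; exact huniq _ hua2 hvb2) ])
        have htv : t ≠ v := (G.ne_of_adj hvt).symm
        have hG' := (IH _ (cardlt v) _ (mopContract G u v) rfl).2.1
        refine mop_nice_contract huv (hG' ⟨t, htv⟩ ?_ ?_)
        · exact ⟨⟨u, hu⟩,
            (mopContract_adj_uslot hu htv (G.ne_of_adj hut).symm (Or.inl hut)).symm⟩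
        · rintro ⟨x, hxv⟩ hxt
          by_cases hxu : x = u
          · subst hxu
            exact ⟨⟨c₁, P1.1⟩, ⟨c₂, P2.1⟩, ⟨c₃, P3.1⟩,
              fun e => e12 (congrArg Subtype.val e),
              fun e => e13 (congrArg Subtype.val e),
              fun e => e23 (congrArg Subtype.val e),
              mopContract_adj_uslot hu P1.1 P1.2.1 P1.2.2,
              mopContract_adj_uslot hu P2.1 P2.2.1 P2.2.2,
              mopContract_adj_uslot hu P3.1 P3.2.1 P3.2.2⟩
          · refine mopContract_deg3_other hu hxu ?_ (h3 x)
            rintro ⟨h1', h2'⟩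
            exact hxt (Subtype.ext (huniq x h1'.symm h2'.symm))
      · have hnocom : ∀ z, ¬(G.Adj u z ∧ G.Adj v z) := fun z hz => h1c ⟨z, hz⟩
        obtain ⟨c₁, c₂, c₃, e12, e13, e23, P1, P2, P3⟩ :=
          mop_three_of_two_two
            (fun y => y ≠ v ∧ y ≠ u ∧ (G.Adj u y ∨ G.Adj v y)) ha12 hb12
            ⟨ha1v, (G.ne_of_adj hua1).symm, Or.inl hua1⟩
            ⟨ha2v, (G.ne_of_adj hua2).symm, Or.inl hua2⟩
            ⟨(G.ne_of_adj hvb1).symm, hb1u, Or.inr hvb1⟩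
            ⟨(G.ne_of_adj hvb2).symm, hb2u, Or.inr hvb2⟩
            (t := u)
            (by rintro y (rfl | rfl) hy <;>
                [ (rcases hy with rfl | rfl;
                    exact absurd ⟨hua1, hvb1⟩ (hnocom _);
                    exact absurd ⟨hua1, hvb2⟩ (hnocom _));
                  (rcases hy with rfl | rfl;
                    exact absurd ⟨hua2, hvb1⟩ (hnocom _);
                    exact absurd ⟨hua2, hvb2⟩ (hnocom _)) ])
        have hG' := (IH _ (cardlt v) _ (mopContract G u v) rfl).1
        refine mop_nice_contract huv (hG' ?_ ⟨⟨u, hu⟩⟩)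
        rintro ⟨x, hxv⟩
        by_cases hxu : x = u
        · subst hxu
          exact ⟨⟨c₁, P1.1⟩, ⟨c₂, P2.1⟩, ⟨c₃, P3.1⟩,
            fun e => e12 (congrArg Subtype.val e),
            fun e => e13 (congrArg Subtype.val e),
            fun e => e23 (congrArg Subtype.val e),
            mopContract_adj_uslot hu P1.1 P1.2.1 P1.2.2,
            mopContract_adj_uslot hu P2.1 P2.2.1 P2.2.2,
            mopContract_adj_uslot hu P3.1 P3.2.1 P3.2.2⟩
        · exact mopContract_deg3_other hu hxu
            (fun hz => hnocom x ⟨hz.1.symm, hz.2.symm⟩) (h3 x)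
  -- ==================== L1 ====================
  have L1 : ∀ v₀, MopDeg1 G v₀ → (∀ x, x ≠ v₀ → MopDeg3 G x) → MopNice G := by
    intro v₀ hd1 hoth
    by_cases hd3 : MopDeg3 G v₀
    · exact L0 (fun x => if hx : x = v₀ then hx ▸ hd3 else hoth x hx) ⟨v₀⟩
    by_cases hd2 : MopDeg2 G v₀
    · obtain ⟨x, y, hxy0, hx0, hy0⟩ := hd2
      have hN : ∀ z, G.Adj v₀ z → z = x ∨ z = y := by
        intro z hz
        by_contra hcon
        push_neg at hcon
        exact hd3 ⟨x, y, z, hxy0, fun e => hcon.1 e.symm, fun e => hcon.2 e.symm,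
          hx0, hy0, hz⟩
      have hxv : x ≠ v₀ := (G.ne_of_adj hx0).symm
      have hyv : y ≠ v₀ := (G.ne_of_adj hy0).symm
      by_cases hxy : G.Adj x y
      · have hG' := (IH _ (cardlt v₀) _ (mopContract G x v₀) rfl).2.2
        refine mop_nice_contract hx0.symm
          (hG' ⟨x, hxv⟩ ⟨y, hyv⟩ (mopContract_adj_of_adj hxy) ?_ ?_ ?_)
        · obtain ⟨d₁, d₂, h12, h1v, h2v, hxa1, hxa2⟩ := mop_deg3_avoid (hoth x hxv) v₀
          exact ⟨⟨d₁, h1v⟩, ⟨d₂, h2v⟩, fun e => h12 (congrArg Subtype.val e),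
            mopContract_adj_of_adj hxa1, mopContract_adj_of_adj hxa2⟩
        · exact mopContract_deg2_other hxv hxy0.symm (hoth y hyv)
        · rintro ⟨z, hzv⟩ hz1 hz2
          have hzx : z ≠ x := fun e => hz1 (Subtype.ext e)
          have hzy : z ≠ y := fun e => hz2 (Subtype.ext e)
          refine mopContract_deg3_other hxv hzx ?_ (hoth z hzv)
          rintro ⟨-, h2'⟩
          rcases hN z h2'.symm with e | e
          · exact hzx e
          · exact hzy e
      · have hG' := (IH _ (cardlt v₀) _ (mopContract G x v₀) rfl).1
        refine mop_nice_contract hx0.symm (hG' ?_ ⟨⟨x, hxv⟩⟩)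
        rintro ⟨z, hzv⟩
        by_cases hzx : z = x
        · subst hzx
          obtain ⟨d₁, d₂, h12, h1v, h2v, hxa1, hxa2⟩ := mop_deg3_avoid (hoth z hzv) v₀
          have hy1 : y ≠ d₁ := fun e => hxy (e ▸ hxa1)
          have hy2 : y ≠ d₂ := fun e => hxy (e ▸ hxa2)
          exact ⟨⟨d₁, h1v⟩, ⟨d₂, h2v⟩, ⟨y, hyv⟩,
            fun e => h12 (congrArg Subtype.val e),
            fun e => hy1 (congrArg Subtype.val e).symm,
            fun e => hy2 (congrArg Subtype.val e).symm,
            mopContract_adj_of_adj hxa1, mopContract_adj_of_adj hxa2,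
            mopContract_adj_uslot hxv hyv hxy0.symm (Or.inr hy0)⟩
        · by_cases hzy : z = y
          · subst hzy
            refine mopContract_deg3_other hxv hzx ?_ (hoth z hzv)
            rintro ⟨h1', -⟩
            exact hxy h1'.symm
          · refine mopContract_deg3_other hxv hzx ?_ (hoth z hzv)
            rintro ⟨-, h2'⟩
            rcases hN z h2'.symm with e | e
            · exact hzx e
            · exact hzy e
    · obtain ⟨x, hx0⟩ := hd1
      have hxv : x ≠ v₀ := (G.ne_of_adj hx0).symm
      have hN1 : ∀ z, G.Adj v₀ z → z = x := by
        intro z hz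
        by_contra hc
        exact hd2 ⟨x, z, fun e => hc e.symm, hx0, hz⟩
      have hG' := (IH _ (cardlt v₀) _ (mopContract G x v₀) rfl).2.1
      refine mop_nice_contract hx0.symm (hG' ⟨x, hxv⟩ ?_ ?_)
      · obtain ⟨d₁, d₂, h12, h1v, h2v, hxa1, hxa2⟩ := mop_deg3_avoid (hoth x hxv) v₀
        exact ⟨⟨d₁, h1v⟩, mopContract_adj_of_adj hxa1⟩
      · rintro ⟨z, hzv⟩ hz1
        have hzx : z ≠ x := fun e => hz1 (Subtype.ext e)
        refine mopContract_deg3_other hxv hzx ?_ (hoth z hzv)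
        rintro ⟨-, h2'⟩
        exact hzx (hN1 z h2'.symm)
  -- ==================== L2 ====================
  have key : ∀ a b, G.Adj a b → MopDeg2 G a → ¬MopDeg3 G a →
      (∀ x, x ≠ a → x ≠ b → MopDeg3 G x) → MopNice G := by
    intro a b hab hd2a hnd3a hoth
    have hba : b ≠ a := (G.ne_of_adj hab).symm
    obtain ⟨n₁, n₂, hn12, hn1, hn2⟩ := hd2a
    obtain ⟨p, hpb, hap⟩ : ∃ p, p ≠ b ∧ G.Adj a p := by
      by_cases h1 : n₁ = b
      · exact ⟨n₂, fun e => hn12 (h1.trans e.symm), hn2⟩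
      · exact ⟨n₁, h1, hn1⟩
    have hNa : ∀ z, G.Adj a z → z = b ∨ z = p := by
      intro z hz
      by_contra hc
      push_neg at hc
      exact hnd3a ⟨b, p, z, fun e => hpb e.symm, fun e => hc.1 e.symm,
        fun e => hc.2 e.symm, hab, hap, hz⟩
    have hpa : p ≠ a := (G.ne_of_adj hap).symm
    by_cases hpB : G.Adj p b
    · by_cases hd3b : MopDeg3 G b
      · have hG' := (IH _ (cardlt a) _ (mopContract G b a) rfl).2.2
        refine mop_nice_contract hab.symm
          (hG' ⟨b, hba⟩ ⟨p, hpa⟩ (mopContract_adj_of_adj hpB.symm) ?_ ?_ ?_)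
        · obtain ⟨c₁, c₂, h12, h1a, h2a, h1', h2'⟩ := mop_deg3_avoid hd3b a
          exact ⟨⟨c₁, h1a⟩, ⟨c₂, h2a⟩, fun e => h12 (congrArg Subtype.val e),
            mopContract_adj_of_adj h1', mopContract_adj_of_adj h2'⟩
        · exact mopContract_deg2_other hba hpb (hoth p hpa hpb)
        · rintro ⟨z, hza⟩ hz1 hz2
          have hzb : z ≠ b := fun e => hz1 (Subtype.ext e)
          have hzp : z ≠ p := fun e => hz2 (Subtype.ext e)
          refine mopContract_deg3_other hba hzb ?_ (hoth z hza hzb)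
          rintro ⟨-, h2'⟩
          rcases hNa z h2'.symm with e | e
          · exact hzb e
          · exact hzp e
      · have hNb : ∀ z, G.Adj b z → z = a ∨ z = p := by
          intro z hz
          by_contra hc
          push_neg at hc
          exact hd3b ⟨a, p, z, hpa.symm, fun e => hc.1 e.symm, fun e => hc.2 e.symm,
            hab.symm, hpB.symm, hz⟩
        set S : Set V := {x | x ≠ a ∧ x ≠ b} with hSdef
        have hpS : p ∈ S := ⟨hpa, hpb⟩
        have cardS : Fintype.card ↥S < n := by
          rw [← hcard]
          refine Fintype.card_lt_of_injective_of_notMem Subtype.val Subtype.val_injective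
            (b := a) ?_
          rintro ⟨⟨w, hw⟩, hval⟩
          exact hw.1 hval
        have hI := (IH _ cardS ↥S (G.induce S) rfl).2.1
        refine mop_nice_induce (hI ⟨p, hpS⟩ ?_ ?_)
        · obtain ⟨r, hra, hrb, hpr⟩ := mop_deg3_avoid2 (hoth p hpa hpb) a b
          exact ⟨⟨r, hra, hrb⟩, hpr⟩
        · rintro ⟨z, hzS⟩ hzp
          have hzp' : z ≠ p := fun e => hzp (Subtype.ext e)
          obtain ⟨c₁, c₂, c₃, e12, e13, e23, f1, f2, f3⟩ := hoth z hzS.1 hzS.2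
          have hmem : ∀ c, G.Adj z c → c ∈ S := by
            intro c hc
            constructor
            · intro e
              rcases hNa z (e ▸ hc).symm with e' | e'
              · exact hzS.2 e'
              · exact hzp' e'
            · intro e
              rcases hNb z (e ▸ hc).symm with e' | e'
              · exact hzS.1 e'
              · exact hzp' e'
          exact ⟨⟨c₁, hmem c₁ f1⟩, ⟨c₂, hmem c₂ f2⟩, ⟨c₃, hmem c₃ f3⟩,
            fun e => e12 (congrArg Subtype.val e), fun e => e13 (congrArg Subtype.val e),
            fun e => e23 (congrArg Subtype.val e), f1, f2, f3⟩
    · have hG' := (IH _ (cardlt a) _ (mopContract G b a) rfl).2.1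
      refine mop_nice_contract hab.symm (hG' ⟨b, hba⟩ ?_ ?_)
      · exact ⟨⟨p, hpa⟩, mopContract_adj_uslot hba hpa hpb (Or.inr hap)⟩
      · rintro ⟨z, hza⟩ hz1
        have hzb : z ≠ b := fun e => hz1 (Subtype.ext e)
        by_cases hzp : z = p
        · subst hzp
          refine mopContract_deg3_other hba hzb ?_ (hoth z hza hzb)
          rintro ⟨h1', -⟩
          exact hpB h1'
        · refine mopContract_deg3_other hba hzb ?_ (hoth z hza hzb)
          rintro ⟨-, h2'⟩
          rcases hNa z h2'.symm with e | e
          · exact hzb e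
          · exact hzp e
  have L2 : ∀ a b, G.Adj a b → MopDeg2 G a → MopDeg2 G b →
      (∀ x, x ≠ a → x ≠ b → MopDeg3 G x) → MopNice G := by
    intro a b hab h2a h2b hoth
    by_cases hd3a : MopDeg3 G a
    · by_cases hd3b : MopDeg3 G b
      · refine L0 (fun x => ?_) ⟨a⟩
        by_cases hx1 : x = a
        · exact hx1 ▸ hd3a
        by_cases hx2 : x = b
        · exact hx2 ▸ hd3b
        · exact hoth x hx1 hx2
      · exact key b a hab.symm h2b hd3b (fun x h1 h2 => hoth x h2 h1)
    · exact key a b hab h2a hd3a hoth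
  exact ⟨L0, L1, L2⟩

end MopAuxC

section MopMain
universe u

private lemma fin4_avoid : ∀ a b c : Fin 4, ∃ d, d ≠ a ∧ d ≠ b ∧ d ≠ c := by decide

theorem mop_main : ∀ (n : ℕ) (V : Type u) [Fintype V] (G : SimpleGraph V),
    Fintype.card V = n →
    ¬ HasMinor G (⊤ : SimpleGraph (Fin 4)) →
    ¬ HasMinor G (completeBipartiteGraph (Fin 2) (Fin 3)) →
    ∃ c : V → Fin 4, (∀ u v : V, G.Adj u v → c u ≠ c v) ∧
      (∀ p q z₁ z₂ : V, p ≠ q → z₁ ≠ z₂ → G.Adj p z₁ → G.Adj p z₂ →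
        G.Adj q z₁ → G.Adj q z₂ → c p ≠ c q) := by
  intro n
  induction n using Nat.strong_induction_on with
  | _ n IH =>
  intro V instV G hcard hK4 hK23
  classical
  rcases isEmpty_or_nonempty V with hemp | hne
  · exact ⟨fun v => isEmptyElim v, fun u => isEmptyElim u, fun p => isEmptyElim p⟩
  have hnice : ¬ MopNice G := by rintro (h | h); exacts [hK4 h, hK23 h]
  obtain ⟨v, hv3⟩ : ∃ v, ¬ MopDeg3 G v := by
    by_contra hc
    push_neg at hc
    exact hnice ((mop_master n V G hcard).1 hc hne)
  have cardlt : Fintype.card {w : V // w ≠ v} < n := by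
    rw [← hcard]
    refine Fintype.card_lt_of_injective_of_notMem Subtype.val Subtype.val_injective
      (b := v) ?_
    rintro ⟨⟨w, hw⟩, hval⟩
    exact hw hval
  by_cases hd2 : MopDeg2 G v
  · -- degree exactly two : contract v into x
    obtain ⟨x, y, hxy0, hx0, hy0⟩ := hd2
    have hN : ∀ z, G.Adj v z → z = x ∨ z = y := by
      intro z hz
      by_contra hcon
      push_neg at hcon
      exact hv3 ⟨x, y, z, hxy0, fun e => hcon.1 e.symm, fun e => hcon.2 e.symm,
        hx0, hy0, hz⟩
    have hxv : x ≠ v := (G.ne_of_adj hx0).symm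
    have hyv : y ≠ v := (G.ne_of_adj hy0).symm
    set G' := mopContract G x v with hG'def
    have hK4' : ¬ HasMinor G' (⊤ : SimpleGraph (Fin 4)) :=
      fun h => hK4 (mop_minor_contract hx0.symm h)
    have hK23' : ¬ HasMinor G' (completeBipartiteGraph (Fin 2) (Fin 3)) :=
      fun h => hK23 (mop_minor_contract hx0.symm h)
    obtain ⟨c', hp', hs'⟩ := IH _ cardlt _ G' rfl hK4' hK23'
    have hGadj : ∀ {p q : V} (hp : p ≠ v) (hq : q ≠ v), G.Adj p q →
        G'.Adj ⟨p, hp⟩ ⟨q, hq⟩ := fun hp hq h => mopContract_adj_of_adj h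
    have hxyadj : G'.Adj ⟨x, hxv⟩ ⟨y, hyv⟩ :=
      mopContract_adj.mpr ⟨fun e => hxy0 (congrArg Subtype.val e),
        Or.inr (Or.inl ⟨rfl, hy0⟩)⟩
    -- the third common neighbour of x and y, if any
    by_cases hw : ∃ w, w ≠ v ∧ G.Adj x w ∧ G.Adj y w
    · obtain ⟨w₀, hw₀v, hxw₀, hyw₀⟩ := hw
      have huniqw : ∀ w', w' ≠ v → G.Adj x w' → G.Adj y w' → w' = w₀ := by
        intro w' h1 h2 h3
        by_contra hne'
        exact hK23 (mop_k23_of_common hxy0 hne' h1 hw₀v h2 hxw₀ hx0.symm h3 hyw₀ hy0.symm)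
      obtain ⟨d, hd1, hd2', hd3⟩ := fin4_avoid (c' ⟨x, hxv⟩) (c' ⟨y, hyv⟩) (c' ⟨w₀, hw₀v⟩)
      set cc : V → Fin 4 := fun z => if h : z = v then d else c' ⟨z, h⟩ with hccdef
      have ccv : cc v = d := by simp [hccdef]
      have ccne : ∀ z (h : z ≠ v), cc z = c' ⟨z, h⟩ := by
        intro z h; simp [hccdef, h]
      refine ⟨cc, ?_, ?_⟩
      · intro p q hpq
        by_cases hp : p = v
        · subst hp
          have hq : q ≠ p := (G.ne_of_adj hpq).symm
          rw [ccv, ccne q hq]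
          rcases hN q hpq with rfl | rfl
          · exact hd1
          · exact hd2'
        · by_cases hq : q = v
          · subst hq
            rw [ccne p hp, ccv]
            rcases hN p hpq.symm with rfl | rfl
            · exact hd1.symm
            · exact hd2'.symm
          · rw [ccne p hp, ccne q hq]
            exact hp' _ _ (hGadj hp hq hpq)
      · intro p q z₁ z₂ hpq hz12 h1 h2 h3 h4
        by_cases hp : p = v
        · subst hp
          have hq : q ≠ p := hpq.symm
          rw [ccv, ccne q hq]
          have hqw : q = w₀ := by
            rcases hN z₁ h1 with rfl | rfl
            · rcases hN z₂ h2 with rfl | rfl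
              · exact absurd rfl hz12
              · exact huniqw q hq h3.symm h4.symm
            · rcases hN z₂ h2 with rfl | rfl
              · exact huniqw q hq h4.symm h3.symm
              · exact absurd rfl hz12
          subst hqw
          exact hd3
        · by_cases hq : q = v
          · subst hq
            rw [ccne p hp, ccv]
            have hpw : p = w₀ := by
              rcases hN z₁ h3 with rfl | rfl
              · rcases hN z₂ h4 with rfl | rfl
                · exact absurd rfl hz12
                · exact huniqw p hp h1.symm h2.symm
              · rcases hN z₂ h4 with rfl | rfl
                · exact huniqw p hp h2.symm h1.symm
                · exact absurd rfl hz12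
            subst hpw
            exact hd3.symm
          · rw [ccne p hp, ccne q hq]
            by_cases hz1 : z₁ = v
            · subst hz1
              rcases hN p h1.symm with rfl | rfl <;> rcases hN q h3.symm with rfl | rfl
              · exact absurd rfl hpq
              · exact hp' _ _ hxyadj
              · exact (hp' _ _ hxyadj).symm
              · exact absurd rfl hpq
            · by_cases hz2 : z₂ = v
              · subst hz2
                rcases hN p h2.symm with rfl | rfl <;> rcases hN q h4.symm with rfl | rfl
                · exact absurd rfl hpq
                · exact hp' _ _ hxyadj
                · exact (hp' _ _ hxyadj).symm
                · exact absurd rfl hpq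
              · exact hs' ⟨p, hp⟩ ⟨q, hq⟩ ⟨z₁, hz1⟩ ⟨z₂, hz2⟩
                  (fun e => hpq (congrArg Subtype.val e))
                  (fun e => hz12 (congrArg Subtype.val e))
                  (hGadj hp hz1 h1) (hGadj hp hz2 h2) (hGadj hq hz1 h3) (hGadj hq hz2 h4)
    · -- no other common neighbour
      obtain ⟨d, hd1, hd2', hd3⟩ := fin4_avoid (c' ⟨x, hxv⟩) (c' ⟨y, hyv⟩) (c' ⟨y, hyv⟩)
      set cc : V → Fin 4 := fun z => if h : z = v then d else c' ⟨z, h⟩ with hccdef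
      have ccv : cc v = d := by simp [hccdef]
      have ccne : ∀ z (h : z ≠ v), cc z = c' ⟨z, h⟩ := by
        intro z h; simp [hccdef, h]
      refine ⟨cc, ?_, ?_⟩
      · intro p q hpq
        by_cases hp : p = v
        · subst hp
          have hq : q ≠ p := (G.ne_of_adj hpq).symm
          rw [ccv, ccne q hq]
          rcases hN q hpq with rfl | rfl
          · exact hd1
          · exact hd2'
        · by_cases hq : q = v
          · subst hq
            rw [ccne p hp, ccv]
            rcases hN p hpq.symm with rfl | rfl
            · exact hd1.symm
            · exact hd2'.symm
          · rw [ccne p hp, ccne q hq]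
            exact hp' _ _ (hGadj hp hq hpq)
      · intro p q z₁ z₂ hpq hz12 h1 h2 h3 h4
        by_cases hp : p = v
        · subst hp
          have hq : q ≠ p := hpq.symm
          exfalso
          rcases hN z₁ h1 with rfl | rfl
          · rcases hN z₂ h2 with rfl | rfl
            · exact hz12 rfl
            · exact hw ⟨q, hq, h3.symm, h4.symm⟩
          · rcases hN z₂ h2 with rfl | rfl
            · exact hw ⟨q, hq, h4.symm, h3.symm⟩
            · exact hz12 rfl
        · by_cases hq : q = v
          · subst hq
            exfalso
            rcases hN z₁ h3 with rfl | rfl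
            · rcases hN z₂ h4 with rfl | rfl
              · exact hz12 rfl
              · exact hw ⟨p, hp, h1.symm, h2.symm⟩
            · rcases hN z₂ h4 with rfl | rfl
              · exact hw ⟨p, hp, h2.symm, h1.symm⟩
              · exact hz12 rfl
          · rw [ccne p hp, ccne q hq]
            by_cases hz1 : z₁ = v
            · subst hz1
              rcases hN p h1.symm with rfl | rfl <;> rcases hN q h3.symm with rfl | rfl
              · exact absurd rfl hpq
              · exact hp' _ _ hxyadj
              · exact (hp' _ _ hxyadj).symm
              · exact absurd rfl hpq
            · by_cases hz2 : z₂ = v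
              · subst hz2
                rcases hN p h2.symm with rfl | rfl <;> rcases hN q h4.symm with rfl | rfl
                · exact absurd rfl hpq
                · exact hp' _ _ hxyadj
                · exact (hp' _ _ hxyadj).symm
                · exact absurd rfl hpq
              · exact hs' ⟨p, hp⟩ ⟨q, hq⟩ ⟨z₁, hz1⟩ ⟨z₂, hz2⟩
                  (fun e => hpq (congrArg Subtype.val e))
                  (fun e => hz12 (congrArg Subtype.val e))
                  (hGadj hp hz1 h1) (hGadj hp hz2 h2) (hGadj hq hz1 h3) (hGadj hq hz2 h4)
  · -- degree at most one : delete v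
    set S : Set V := {w | w ≠ v} with hSdef
    have cardS : Fintype.card ↥S < n := by
      rw [← hcard]
      refine Fintype.card_lt_of_injective_of_notMem Subtype.val Subtype.val_injective
        (b := v) ?_
      rintro ⟨⟨w, hw⟩, hval⟩
      exact hw hval
    have hK4' : ¬ HasMinor (G.induce S) (⊤ : SimpleGraph (Fin 4)) :=
      fun h => hK4 (mop_minor_induce h)
    have hK23' : ¬ HasMinor (G.induce S) (completeBipartiteGraph (Fin 2) (Fin 3)) :=
      fun h => hK23 (mop_minor_induce h)
    obtain ⟨c', hp', hs'⟩ := IH _ cardS ↥S (G.induce S) rfl hK4' hK23'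
    have hIadj : ∀ {p q : V} (hp : p ≠ v) (hq : q ≠ v), G.Adj p q →
        (G.induce S).Adj ⟨p, hp⟩ ⟨q, hq⟩ := fun hp hq h => h
    by_cases hd1 : ∃ x, G.Adj v x
    · obtain ⟨x, hx0⟩ := hd1
      have hxv : x ≠ v := (G.ne_of_adj hx0).symm
      have hN1 : ∀ z, G.Adj v z → z = x := by
        intro z hz
        by_contra hc
        exact hd2 ⟨x, z, fun e => hc e.symm, hx0, hz⟩
      obtain ⟨d, hd1', -, -⟩ :=
        fin4_avoid (c' ⟨x, hxv⟩) (c' ⟨x, hxv⟩) (c' ⟨x, hxv⟩)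
      set cc : V → Fin 4 := fun z => if h : z = v then d else c' ⟨z, h⟩ with hccdef
      have ccv : cc v = d := by simp [hccdef]
      have ccne : ∀ z (h : z ≠ v), cc z = c' ⟨z, h⟩ := by
        intro z h; simp [hccdef, h]
      refine ⟨cc, ?_, ?_⟩
      · intro p q hpq
        by_cases hp : p = v
        · subst hp
          have hq : q ≠ p := (G.ne_of_adj hpq).symm
          rw [ccv, ccne q hq]
          obtain rfl := hN1 q hpq
          exact hd1'
        · by_cases hq : q = v
          · subst hq
            rw [ccne p hp, ccv]
            obtain rfl := hN1 p hpq.symm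
            exact hd1'.symm
          · rw [ccne p hp, ccne q hq]
            exact hp' _ _ (hIadj hp hq hpq)
      · intro p q z₁ z₂ hpq hz12 h1 h2 h3 h4
        by_cases hp : p = v
        · subst hp
          exact absurd ((hN1 z₁ h1).trans (hN1 z₂ h2).symm) hz12
        · by_cases hq : q = v
          · subst hq
            exact absurd ((hN1 z₁ h3).trans (hN1 z₂ h4).symm) hz12
          · by_cases hz1 : z₁ = v
            · subst hz1
              exact absurd ((hN1 p h1.symm).trans (hN1 q h3.symm).symm) hpq
            · by_cases hz2 : z₂ = v
              · subst hz2
                exact absurd ((hN1 p h2.symm).trans (hN1 q h4.symm).symm) hpq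
              · rw [ccne p hp, ccne q hq]
                exact hs' ⟨p, hp⟩ ⟨q, hq⟩ ⟨z₁, hz1⟩ ⟨z₂, hz2⟩
                  (fun e => hpq (congrArg Subtype.val e))
                  (fun e => hz12 (congrArg Subtype.val e))
                  (hIadj hp hz1 h1) (hIadj hp hz2 h2) (hIadj hq hz1 h3) (hIadj hq hz2 h4)
    · -- isolated vertex
      set cc : V → Fin 4 := fun z => if h : z = v then 0 else c' ⟨z, h⟩ with hccdef
      have ccne : ∀ z (h : z ≠ v), cc z = c' ⟨z, h⟩ := by
        intro z h; simp [hccdef, h]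
      refine ⟨cc, ?_, ?_⟩
      · intro p q hpq
        by_cases hp : p = v
        · exact absurd ⟨q, hp ▸ hpq⟩ hd1
        · by_cases hq : q = v
          · exact absurd ⟨p, hq ▸ hpq.symm⟩ hd1
          · rw [ccne p hp, ccne q hq]
            exact hp' _ _ (hIadj hp hq hpq)
      · intro p q z₁ z₂ hpq hz12 h1 h2 h3 h4
        by_cases hp : p = v
        · exact absurd ⟨z₁, hp ▸ h1⟩ hd1
        · by_cases hq : q = v
          · exact absurd ⟨z₁, hq ▸ h3⟩ hd1
          · by_cases hz1 : z₁ = v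
            · exact absurd ⟨p, hz1 ▸ h1.symm⟩ hd1
            · by_cases hz2 : z₂ = v
              · exact absurd ⟨p, hz2 ▸ h2.symm⟩ hd1
              · rw [ccne p hp, ccne q hq]
                exact hs' ⟨p, hp⟩ ⟨q, hq⟩ ⟨z₁, hz1⟩ ⟨z₂, hz2⟩
                  (fun e => hpq (congrArg Subtype.val e))
                  (fun e => hz12 (congrArg Subtype.val e))
                  (hIadj hp hz1 h1) (hIadj hp hz2 h2) (hIadj hq hz1 h3) (hIadj hq hz2 h4)

end MopMain


/-- Every maximal outerplanar graph has a proper 4-coloring in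
which every 4-cycle receives all four colors. -/
theorem exists_fourColoring_rainbow_fourCycles {V : Type*} [Fintype V] [DecidableEq V]
    (G : SimpleGraph V) [DecidableRel G.Adj] (h : MaximalOuterplanar G) :
    ∃ c : V → Fin 4, (∀ u v : V, G.Adj u v → c u ≠ c v) ∧
      ∀ a b d e : V, G.Adj a b → G.Adj b d → G.Adj d e → G.Adj e a →
        a ≠ d → b ≠ e →
        c a ≠ c b ∧ c a ≠ c d ∧ c a ≠ c e ∧ c b ≠ c d ∧ c b ≠ c e ∧ c d ≠ c e := by
  obtain ⟨hK4, hK23⟩ := h.1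
  obtain ⟨c, hp, hs⟩ := mop_main (Fintype.card V) V G rfl hK4 hK23
  refine ⟨c, hp, ?_⟩
  intro a b d e hab hbd hde hea had hbe
  refine ⟨hp _ _ hab, ?_, (hp _ _ hea).symm, hp _ _ hbd, ?_, hp _ _ hde⟩
  · exact hs a d b e had hbe hab hea.symm hbd.symm hde
  · exact hs b e a d hbe had hab.symm hbd hea hde.symm
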